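/- Let h_c = m·h_f with m a positive integer, W_f(ζ) = max(0, 1 - |ζ|/h_f), W_c(ζ) = max(0, 1 - |ζ|/h_c), fine grid points x̃_j = j·h_f (j ∈ ℤ), and coarse grid points x_k = k·h_c. Then for any particle position x_p ∈ ℝ and any coarse grid point x_k: ∑_{j ∈ ℤ} W_c(x_k - x̃_j)·W_f(x̃_j - x_p) = W_c(x_k - x_p). -/

import Mathlib

lemma key_affine (m : ℕ) (hm : 0 < m) (n : ℤ) (t : ℝ) (ht0 : 0 ≤ t) (ht1 : t < 1) :
    max 0 (1 - |(n : ℝ) - t| / m) =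
      (1 - t) * max 0 (1 - |(n : ℝ)| / m) + t * max 0 (1 - |((n : ℝ)) - 1| / m) := by
  have hM : (1 : ℝ) ≤ m := by exact_mod_cast hm
  have hMpos : (0 : ℝ) < m := by linarith
  rcases le_or_gt n (-(m : ℤ)) with h1 | h1
  · -- n ≤ -m : everything zero
    have hn : (n : ℝ) ≤ -(m : ℝ) := by exact_mod_cast h1
    rw [abs_of_nonpos (by linarith), abs_of_nonpos (by linarith), abs_of_nonpos (by linarith),
      max_eq_left (by rw [sub_nonpos, one_le_div hMpos]; nlinarith),
      max_eq_left (by rw [sub_nonpos, one_le_div hMpos]; nlinarith),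
      max_eq_left (by rw [sub_nonpos, one_le_div hMpos]; nlinarith)]
    ring
  rcases le_or_gt n 0 with h2 | h2
  · -- -m < n ≤ 0
    have hn : (n : ℝ) ≤ 0 := by exact_mod_cast h2
    have hn' : -(m : ℝ) + 1 ≤ (n : ℝ) := by exact_mod_cast h1
    rw [abs_of_nonpos (by linarith), abs_of_nonpos (by linarith), abs_of_nonpos (by linarith),
      max_eq_right (by rw [sub_nonneg, div_le_one hMpos]; nlinarith),
      max_eq_right (by rw [sub_nonneg, div_le_one hMpos]; nlinarith),
      max_eq_right (by rw [sub_nonneg, div_le_one hMpos]; nlinarith)]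
    field_simp
    ring
  rcases le_or_gt n (m : ℤ) with h3 | h3
  · -- 1 ≤ n ≤ m
    have hn : (1 : ℝ) ≤ (n : ℝ) := by exact_mod_cast h2
    have hn' : (n : ℝ) ≤ (m : ℝ) := by exact_mod_cast h3
    rw [abs_of_nonneg (by linarith), abs_of_nonneg (by linarith), abs_of_nonneg (by linarith),
      max_eq_right (by rw [sub_nonneg, div_le_one hMpos]; nlinarith),
      max_eq_right (by rw [sub_nonneg, div_le_one hMpos]; nlinarith),
      max_eq_right (by rw [sub_nonneg, div_le_one hMpos]; nlinarith)]
    field_simp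
    ring
  · -- n ≥ m + 1
    have hn : (m : ℝ) + 1 ≤ (n : ℝ) := by exact_mod_cast h3
    rw [abs_of_nonneg (by linarith), abs_of_nonneg (by linarith), abs_of_nonneg (by linarith),
      max_eq_left (by rw [sub_nonpos, one_le_div hMpos]; nlinarith),
      max_eq_left (by rw [sub_nonpos, one_le_div hMpos]; nlinarith),
      max_eq_left (by rw [sub_nonpos, one_le_div hMpos]; nlinarith)]
    ring
/-- Node-centered equivalence of two-step and direct deposition: with `h_c = m·h_f`,
hat functions `W_f`, `W_c` of widths `h_f`, `h_c`, fine grid points `x̃_j = j·h_f` and a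
coarse grid point `x_k = k·h_c`, for any particle position `x_p`,
`∑_{j ∈ ℤ} W_c(x_k - x̃_j)·W_f(x̃_j - x_p) = W_c(x_k - x_p)`. -/
theorem two_step_deposition_node_centered (hf : ℝ) (hhf : 0 < hf)
    (m : ℕ) (hm : 0 < m) (hc : ℝ) (hhc : hc = (m : ℝ) * hf)
    (Wf Wc : ℝ → ℝ)
    (hWf : ∀ ζ, Wf ζ = max 0 (1 - |ζ| / hf))
    (hWc : ∀ ζ, Wc ζ = max 0 (1 - |ζ| / hc))
    (k : ℤ) (xp : ℝ) :
    ∑' j : ℤ, Wc ((k : ℝ) * hc - (j : ℝ) * hf) * Wf ((j : ℝ) * hf - xp)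
      = Wc ((k : ℝ) * hc - xp) := by
  set j0 : ℤ := ⌊xp / hf⌋ with hj0
  set t : ℝ := xp / hf - j0 with htdef
  have ht0 : 0 ≤ t := by
    have := Int.floor_le (xp / hf); simp [htdef]; linarith
  have ht1 : t < 1 := by
    have := Int.lt_floor_add_one (xp / hf); simp [htdef]; linarith
  have hxp : xp = (j0 : ℝ) * hf + t * hf := by
    rw [htdef, sub_mul, div_mul_cancel₀ xp (ne_of_gt hhf)]; ring
  -- Wf vanishes outside {j0, j0+1}
  have hWfz : ∀ j : ℤ, j ∉ ({j0, j0 + 1} : Finset ℤ) →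
      Wc ((k : ℝ) * hc - (j : ℝ) * hf) * Wf ((j : ℝ) * hf - xp) = 0 := by
    intro j hj
    simp only [Finset.mem_insert, Finset.mem_singleton] at hj
    push_neg at hj
    have habs : hf ≤ |(j : ℝ) * hf - xp| := by
      rcases lt_or_gt_of_ne hj.1 with h | h
      · -- j ≤ j0 - 1
        have hji : (j : ℝ) ≤ (j0 : ℝ) - 1 := by exact_mod_cast Int.le_sub_one_of_lt h
        rw [abs_of_nonpos (by nlinarith)]
        nlinarith
      · -- j ≥ j0 + 2
        have hji : (j0 : ℝ) + 2 ≤ (j : ℝ) := by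
          have : j0 + 2 ≤ j := by omega
          exact_mod_cast this
        rw [abs_of_nonneg (by nlinarith)]
        nlinarith
    have : Wf ((j : ℝ) * hf - xp) = 0 := by
      rw [hWf]
      apply max_eq_left
      rw [sub_nonpos, one_le_div hhf]
      exact habs
    rw [this, mul_zero]
  rw [tsum_eq_sum hWfz, Finset.sum_insert (by simp), Finset.sum_singleton]
  -- compute the two Wf values
  have hWf1 : Wf ((j0 : ℝ) * hf - xp) = 1 - t := by
    rw [hWf, hxp]
    have : (j0 : ℝ) * hf - ((j0 : ℝ) * hf + t * hf) = -(t * hf) := by ring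
    rw [this, abs_neg, abs_of_nonneg (by nlinarith), mul_div_assoc,
      div_self (ne_of_gt hhf), mul_one, max_eq_right (by linarith)]
  have hWf2 : Wf (((j0 + 1 : ℤ) : ℝ) * hf - xp) = t := by
    rw [hWf, hxp]
    push_cast
    have : ((j0 : ℝ) + 1) * hf - ((j0 : ℝ) * hf + t * hf) = (1 - t) * hf := by ring
    rw [this, abs_of_nonneg (by nlinarith), mul_div_assoc,
      div_self (ne_of_gt hhf), mul_one, max_eq_right (by linarith)]
    ring
  -- compute Wc values via key lemma; set n = k*m - j0
  set n : ℤ := k * m - j0 with hn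
  have hMpos : (0 : ℝ) < m := by exact_mod_cast hm
  have hWcgen : ∀ z : ℝ, Wc (z * hf) = max 0 (1 - |z| / m) := by
    intro z
    rw [hWc, hhc, abs_mul, abs_of_nonneg hhf.le]
    congr 1
    field_simp
  have e1 : (k : ℝ) * hc - (j0 : ℝ) * hf = (n : ℝ) * hf := by
    rw [hhc]; push_cast [hn]; ring
  have e2 : (k : ℝ) * hc - ((j0 + 1 : ℤ) : ℝ) * hf = ((n : ℝ) - 1) * hf := by
    rw [hhc]; push_cast [hn]; ring
  have e3 : (k : ℝ) * hc - xp = ((n : ℝ) - t) * hf := by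
    rw [hhc, hxp]; push_cast [hn]; ring
  rw [e1, e2, e3, hWf1, hWf2, hWcgen, hWcgen, hWcgen, key_affine m hm n t ht0 ht1]
  ring
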